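/- Suppose for each coordinate γ ∈ Γ an online algorithm's forecasts ŷ_t^γ satisfy the regret bound ∑_{t=1}^T (y_t^γ − ŷ_t^γ)² − ∑_{t=1}^T (y_t^γ − u^γ·x_t)² ≤ B_γ for every comparison vector u^γ. If the true vectors y_t lie in the kernel of a matrix K, and the projected forecasts are ỹ_t = Π_K(ŷ_t) where Π_K is the orthogonal projection onto Ker(K), then for any matrix U = (u^1 | … | u^{|Γ|}) with Im(Uᵀ) ⊆ Ker(K), the total regret satisfies ∑_{t=1}^T ‖y_t − ỹ_t‖² − ∑_{t=1}^T ‖y_t − Uᵀx_t‖² ≤ ∑_{γ∈Γ} B_γ. -/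

import Mathlib

open Finset in
lemma normsq_eq_sum {Γ : Type*} [Fintype Γ] (v : EuclideanSpace ℝ Γ) :
    ‖v‖ ^ 2 = ∑ γ, (v γ) ^ 2 := by
  rw [EuclideanSpace.norm_eq, Real.sq_sqrt (by positivity)]
  simp [sq_abs]

open Finset in
/-- Reconciliation theorem: if each per-coordinate regret is bounded by `B γ`, the true
vectors lie in `Ker K`, and forecasts are orthogonally projected onto `Ker K`, then the
total regret against any matrix `U` with `Im Uᵀ ⊆ Ker K` is at most `∑ γ, B γ`. -/
theorem stmt_1 {Γ m : Type*} [Fintype Γ] [DecidableEq Γ] [Fintype m]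
    (T : ℕ) (K : Matrix m Γ ℝ)
    (V : Submodule ℝ (EuclideanSpace ℝ Γ))
    (hV : ∀ v : EuclideanSpace ℝ Γ, v ∈ V ↔ K.mulVec (fun i => v i) = 0)
    (y x yhat : Fin T → EuclideanSpace ℝ Γ)
    (hy : ∀ t, y t ∈ V)
    (ytilde : Fin T → EuclideanSpace ℝ Γ)
    (htilde : ∀ t, ytilde t = (V.orthogonalProjectionOnto (yhat t) : EuclideanSpace ℝ Γ))
    (B : Γ → ℝ)
    (hreg : ∀ γ : Γ, ∀ u : Γ → ℝ,
      (∑ t, (y t γ - yhat t γ) ^ 2) - (∑ t, (y t γ - ∑ i, u i * x t i) ^ 2) ≤ B γ)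
    (U : Matrix Γ Γ ℝ)
    (hU : ∀ z : Γ → ℝ,
      (WithLp.equiv 2 (Γ → ℝ)).symm (Matrix.mulVec U.transpose z) ∈ V) :
    (∑ t, ‖y t - ytilde t‖ ^ 2)
      - (∑ t, ‖y t -
          (WithLp.equiv 2 (Γ → ℝ)).symm (Matrix.mulVec U.transpose (fun i => x t i))‖ ^ 2)
      ≤ ∑ γ, B γ := by
  have hproj : ∀ t, ‖y t - ytilde t‖ ^ 2 ≤ ‖y t - yhat t‖ ^ 2 := by
    intro t
    have h1 : y t - ytilde t =
        (V.orthogonalProjectionOnto (y t - yhat t) : EuclideanSpace ℝ Γ) := by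
      rw [htilde, map_sub, Submodule.coe_sub, ← Submodule.starProjection_apply V (y t),
        Submodule.starProjection_eq_self_iff.2 (hy t)]
    rw [h1]
    have := Submodule.orthogonalProjectionOnto_norm_le V
    have h2 : ‖(V.orthogonalProjectionOnto (y t - yhat t) : EuclideanSpace ℝ Γ)‖
        ≤ ‖y t - yhat t‖ := by
      calc ‖(V.orthogonalProjectionOnto (y t - yhat t) : EuclideanSpace ℝ Γ)‖
          ≤ ‖V.orthogonalProjectionOnto‖ * ‖y t - yhat t‖ :=
            (V.orthogonalProjectionOnto).le_opNorm _
        _ ≤ 1 * ‖y t - yhat t‖ := by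
            apply mul_le_mul_of_nonneg_right this (norm_nonneg _)
        _ = ‖y t - yhat t‖ := one_mul _
    exact pow_le_pow_left₀ (norm_nonneg _) h2 2
  have key : (∑ t, ‖y t - yhat t‖ ^ 2)
      - (∑ t, ‖y t -
          (WithLp.equiv 2 (Γ → ℝ)).symm (Matrix.mulVec U.transpose (fun i => x t i))‖ ^ 2)
      ≤ ∑ γ, B γ := by
    have expand : ∀ t, ‖y t - yhat t‖ ^ 2 = ∑ γ, (y t γ - yhat t γ) ^ 2 := by
      intro t; rw [normsq_eq_sum]; rfl
    have expand2 : ∀ t, ‖y t -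
        (WithLp.equiv 2 (Γ → ℝ)).symm (Matrix.mulVec U.transpose (fun i => x t i))‖ ^ 2
        = ∑ γ, (y t γ - ∑ i, U i γ * x t i) ^ 2 := by
      intro t; rw [normsq_eq_sum]
      refine Finset.sum_congr rfl fun γ _ => ?_
      simp [Matrix.mulVec, dotProduct, Matrix.transpose, mul_comm]
    simp only [expand, expand2]
    have hc : ∀ f : Fin T → Γ → ℝ, ∑ t, ∑ γ, f t γ = ∑ γ, ∑ t, f t γ :=
      fun f => Finset.sum_comm
    rw [hc, hc, ← Finset.sum_sub_distrib]
    exact Finset.sum_le_sum fun γ _ => hreg γ (fun i => U i γ)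
  have hs : (∑ t, ‖y t - ytilde t‖ ^ 2) ≤ ∑ t, ‖y t - yhat t‖ ^ 2 :=
    Finset.sum_le_sum fun t _ => hproj t
  linarith
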